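/- Let n ≥ 1, let M be an additive subgroup of ℝⁿ that is dense in ℝⁿ and contains u = (1,1,…,1), and set M⁺ = { g ∈ M : every coordinate of g is strictly positive } ∪ {0}. Let φ : M → ℝ be an additive map with φ(g) ≥ 0 for all g ∈ M⁺ and φ(u) = 1. Then there exist nonnegative real numbers r₁, …, rₙ with r₁ + ⋯ + rₙ = 1 such that φ(x) = r₁x₁ + ⋯ + rₙxₙ for every x = (x₁,…,xₙ) ∈ M. -/

import Mathlib

open Filter Topology

/-- The positive cone of an additive subgroup `M` of `ℝⁿ`:
elements of `M` all of whose coordinates are strictly positive, together with `0`. -/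
def Mplus (n : ℕ) (M : AddSubgroup (EuclideanSpace ℝ (Fin n))) :
    Set (EuclideanSpace ℝ (Fin n)) :=
  {g | g ∈ M ∧ ∀ i, 0 < g i} ∪ {0}

theorem stmt13 (n : ℕ) (hn : 1 ≤ n) (M : AddSubgroup (EuclideanSpace ℝ (Fin n)))
    (hdense : Dense (M : Set (EuclideanSpace ℝ (Fin n))))
    (hu : ((WithLp.toLp 2 (fun _ => 1 : Fin n → ℝ) : EuclideanSpace ℝ (Fin n))) ∈ M)
    (φ : M →+ ℝ)
    (hpos : ∀ g : M, (g : EuclideanSpace ℝ (Fin n)) ∈ Mplus n M → 0 ≤ φ g)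
    (hunit : φ ⟨WithLp.toLp 2 (fun _ => 1), hu⟩ = 1) :
    ∃ r : Fin n → ℝ, (∀ i, 0 ≤ r i) ∧ (∑ i, r i) = 1 ∧
      ∀ x : M, φ x = ∑ i, r i * (x : EuclideanSpace ℝ (Fin n)) i := by
  haveI : NeZero n := ⟨Nat.one_le_iff_ne_zero.mp hn⟩
  set E := EuclideanSpace ℝ (Fin n)
  set u : E := WithLp.toLp 2 (fun _ => 1) with hu_def
  set gu : M := ⟨u, hu⟩ with hgu
  have hcoord : ∀ (x : E) (i : Fin n), |x i| ≤ ‖x‖ := by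
    intro x i
    rw [EuclideanSpace.norm_eq]
    calc |x i| = Real.sqrt (‖x i‖ ^ 2) := by
          rw [Real.norm_eq_abs, Real.sqrt_sq_eq_abs, abs_abs]
      _ ≤ _ := Real.sqrt_le_sqrt (Finset.single_le_sum (f := fun j => ‖x j‖ ^ 2)
          (fun j _ => sq_nonneg _) (Finset.mem_univ i))
  -- key upper bound: φ g ≤ ‖g‖, given all coordinates bounded by b
  have hkey : ∀ (g : M) (b : ℝ), (∀ i, (g : E) i ≤ b) → φ g ≤ b := by
    intro g b hb
    refine le_of_forall_pos_le_add ?_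
    intro ε hε
    obtain ⟨m, hm⟩ := exists_nat_gt (2 / ε)
    have hm0 : (0:ℝ) < m := lt_trans (div_pos two_pos hε) hm
    set k : ℤ := ⌈(m : ℝ) * b⌉ + 1 with hk
    set h : M := k • gu - (m : ℤ) • g with hh
    have hcoords : ∀ i, (h : E) i = (k : ℝ) - (m : ℝ) * (g : E) i := by
      intro i
      simp [hh, hgu, hu_def, u]
    have hpos' : 0 ≤ φ h := by
      apply hpos
      left
      refine ⟨SetLike.coe_mem h, fun i => ?_⟩
      rw [hcoords i]
      have h1 : (m : ℝ) * (g : E) i ≤ (m : ℝ) * b :=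
        mul_le_mul_of_nonneg_left (hb i) hm0.le
      have h2 : (m : ℝ) * b ≤ ⌈(m : ℝ) * b⌉ := Int.le_ceil _
      have : (m : ℝ) * (g : E) i < (k : ℝ) := by
        push_cast [hk]; linarith
      linarith
    have hφh : φ h = (k : ℝ) - (m : ℝ) * φ g := by
      simp [hh, map_sub, map_zsmul, hgu, hunit]
      rw [← hgu, hunit, mul_one]
    have hkle : (k : ℝ) ≤ (m : ℝ) * b + 2 := by
      push_cast [hk]
      have := Int.ceil_lt_add_one ((m : ℝ) * b)
      linarith
    have : (m : ℝ) * φ g ≤ (m : ℝ) * b + 2 := by linarith [hpos', hφh.symm ▸ hpos']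
    have h2ε : 2 / (m : ℝ) < ε := by
      rw [div_lt_iff₀ hm0]
      have h6 := (div_lt_iff₀ hε).mp hm
      have h7 := mul_comm ε (m : ℝ)
      linarith
    have h3 : φ g * m ≤ (m : ℝ) * b + 2 := by
      have := mul_comm (φ g) (m : ℝ)
      linarith
    have h4 : φ g ≤ ((m : ℝ) * b + 2) / m := (le_div_iff₀ hm0).mpr h3
    have h5 : ((m : ℝ) * b + 2) / m = b + 2 / m := by
      field_simp
    linarith
  have hnorm : ∀ g : M, |φ g| ≤ ‖(g : E)‖ := by
    intro g
    rw [abs_le]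
    constructor
    · have := hkey (-g) ‖(g : E)‖ (fun i => by
        have := hcoord (g : E) i
        have h2 : ((-g : M) : E) i = -((g : E) i) := by simp
        rw [h2]
        cases abs_le.mp this; linarith)
      rw [map_neg] at this
      linarith
    · exact hkey g ‖(g : E)‖ (fun i => le_trans (le_abs_self _) (hcoord _ i))
  have hlip : LipschitzWith 1 (φ : M → ℝ) := by
    apply LipschitzWith.of_dist_le_mul
    intro a b
    simp only [NNReal.coe_one, one_mul]
    rw [Real.dist_eq, ← map_sub, Subtype.dist_eq, dist_eq_norm]
    have : ((a - b : M) : E) = (a : E) - (b : E) := by simp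
    rw [← this]
    exact hnorm _
  -- extension
  have hui : IsUniformInducing ((↑) : M → E) := isUniformEmbedding_subtype_val.isUniformInducing
  have hdr : DenseRange ((↑) : M → E) := hdense.denseRange_val
  have di : IsDenseInducing ((↑) : M → E) := hui.isDenseInducing hdr
  set Φ : E → ℝ := (hui.isDenseInducing hdr).extend φ with hΦ
  have hΦc : Continuous Φ :=
    (uniformContinuous_uniformly_extend hui hdr hlip.uniformContinuous).continuous
  have hΦeq : ∀ g : M, Φ (g : E) = φ g := fun g =>
    (hui.isDenseInducing hdr).extend_eq hlip.continuous g
  have hΦadd : ∀ x y : E, Φ (x + y) = Φ x + Φ y := by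
    have key : (fun p : E × E => Φ (p.1 + p.2)) = fun p : E × E => Φ p.1 + Φ p.2 := by
      refine Continuous.ext_on (hdense.prod hdense) ?_ ?_ ?_
      · exact hΦc.comp (continuous_fst.add continuous_snd)
      · exact (hΦc.comp continuous_fst).add (hΦc.comp continuous_snd)
      · rintro ⟨x, y⟩ ⟨hx, hy⟩
        have hxy : x + y ∈ M := M.add_mem hx hy
        have : Φ (x + y) = φ (⟨x, hx⟩ + ⟨y, hy⟩) := hΦeq ⟨x + y, hxy⟩
        simp only [map_add] at this
        simpa [hΦeq ⟨x, hx⟩, hΦeq ⟨y, hy⟩] using this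
    intro x y
    exact congrFun key (x, y)
  set ΦA : E →+ ℝ := AddMonoidHom.mk' Φ (fun x y => hΦadd x y) with hΦA
  set L : E →L[ℝ] ℝ := ΦA.toRealLinearMap hΦc with hL
  have hLΦ : ∀ x : E, L x = Φ x := fun x => rfl
  set r : Fin n → ℝ := fun i => Φ (EuclideanSpace.single i (1:ℝ)) with hr
  have hrep : ∀ x : E, Φ x = ∑ i, r i * x i := by
    intro x
    have hx : x = ∑ i, x i • EuclideanSpace.single i (1:ℝ) := by
      have h := (EuclideanSpace.basisFun (Fin n) ℝ).sum_repr x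
      simp only [EuclideanSpace.basisFun_apply, EuclideanSpace.basisFun_repr] at h
      exact h.symm
    calc Φ x = L x := (hLΦ x).symm
      _ = ∑ i, x i * L (EuclideanSpace.single i (1:ℝ)) := by
          conv_lhs => rw [hx]
          rw [map_sum]
          simp [smul_eq_mul]
      _ = ∑ i, r i * x i := by
          refine Finset.sum_congr rfl fun i _ => ?_
          rw [hLΦ, mul_comm]
  have hΦu : Φ u = 1 := by rw [show u = (gu : E) from rfl, hΦeq, hunit]
  -- positivity on the open cone
  have hcone : ∀ x : E, (∀ i, 0 < x i) → 0 ≤ Φ x := by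
    intro x hx
    set C : Set E := {y | ∀ i, 0 < y i} with hC
    have hCo : IsOpen C := by
      have : C = ⋂ i, {y : E | 0 < y i} := by ext y; simp [hC]
      rw [this]
      exact isOpen_iInter_of_finite fun i =>
        isOpen_lt continuous_const (EuclideanSpace.proj i).continuous
    have hxc : x ∈ closure (C ∩ (M : Set E)) := hdense.open_subset_closure_inter hCo hx
    have hsub : C ∩ (M : Set E) ⊆ {y : E | 0 ≤ Φ y} := by
      rintro y ⟨hyC, hyM⟩
      have : Φ y = φ ⟨y, hyM⟩ := hΦeq ⟨y, hyM⟩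
      rw [Set.mem_setOf_eq, this]
      exact hpos ⟨y, hyM⟩ (Or.inl ⟨hyM, hyC⟩)
    have hclosed : IsClosed {y : E | 0 ≤ Φ y} := isClosed_le continuous_const hΦc
    exact hclosed.closure_subset_iff.mpr hsub hxc
  have hr0 : ∀ i, 0 ≤ r i := by
    intro i
    refine le_of_forall_pos_le_add ?_
    intro ε hε
    have h1 : 0 ≤ Φ (EuclideanSpace.single i (1:ℝ) + ε • u) := by
      apply hcone
      intro j
      have hu1 : u j = 1 := rfl
      have hadd : (EuclideanSpace.single i (1:ℝ) + ε • u) j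
          = EuclideanSpace.single i (1:ℝ) j + ε * u j := rfl
      have : (EuclideanSpace.single i (1:ℝ) + ε • u) j
          = EuclideanSpace.single i (1:ℝ) j + ε := by
        rw [hadd, hu1, mul_one]
      rw [this]
      rcases eq_or_ne j i with h | h
      · simp [h, EuclideanSpace.single_apply]; linarith
      · simp [EuclideanSpace.single_apply, h]; linarith
    have h2 : Φ (EuclideanSpace.single i (1:ℝ) + ε • u) = r i + ε := by
      rw [← hLΦ, map_add, map_smul, hLΦ, hLΦ, hΦu, smul_eq_mul, mul_one, hr]
    linarith [h2 ▸ h1]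
  refine ⟨r, hr0, ?_, ?_⟩
  · have := hrep u
    rw [hΦu] at this
    simpa [hu_def] using this.symm
  · intro x
    rw [← hΦeq x, hrep]
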